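/- Let d ≥ 2 and L ≥ 1 be integers, and let T be a finite tree on n vertices in which every vertex has degree at most d and n > L. Then the vertex set of T can be partitioned into nonempty parts such that each part induces a connected subgraph of T and each part contains more than L and at most d·L + 1 vertices. -/

import Mathlib

set_option linter.unusedSectionVars false

open SimpleGraph Set

section Helpers
variable {V : Type} [DecidableEq V] {G : SimpleGraph V}

variable (G) in
/-- reachability within a vertex set `S` -/
def ReachIn (S : Set V) (u w : V) : Prop := ∃ p : G.Walk u w, ∀ x ∈ p.support, x ∈ S
namespace ReachIn

lemma refl {S : Set V} {u : V} (h : u ∈ S) : ReachIn G S u u :=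
  ⟨.nil, by simp [h]⟩

lemma mem_left {S : Set V} {u w : V} (h : ReachIn G S u w) : u ∈ S := by
  obtain ⟨p, hp⟩ := h; exact hp _ p.start_mem_support

lemma mem_right {S : Set V} {u w : V} (h : ReachIn G S u w) : w ∈ S := by
  obtain ⟨p, hp⟩ := h; exact hp _ p.end_mem_support

lemma symm {S : Set V} {u w : V} (h : ReachIn G S u w) : ReachIn G S w u := by
  obtain ⟨p, hp⟩ := h
  exact ⟨p.reverse, by simpa using hp⟩

lemma trans {S : Set V} {u w x : V} (h : ReachIn G S u w) (h' : ReachIn G S w x) :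
    ReachIn G S u x := by
  obtain ⟨p, hp⟩ := h; obtain ⟨q, hq⟩ := h'
  refine ⟨p.append q, fun y hy => ?_⟩
  rw [SimpleGraph.Walk.mem_support_append_iff] at hy
  exact hy.elim (hp y) (hq y)

end ReachIn

variable (G) in
/-- the connected component of `w` within the vertex set `S` -/
def compIn (S : Set V) (w : V) : Set V := {u | ReachIn G S w u}

lemma compIn_subset (S : Set V) (w : V) : compIn G S w ⊆ S := fun _ h => h.mem_right

lemma mem_compIn_self {S : Set V} {w : V} (h : w ∈ S) : w ∈ compIn G S w := ReachIn.refl h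

lemma compIn_eq {S : Set V} {w u : V} (h : ReachIn G S w u) : compIn G S u = compIn G S w := by
  ext x
  exact ⟨fun hx => h.trans hx, fun hx => h.symm.trans hx⟩

lemma adj_mem_compIn {S : Set V} {w x y : V} (hx : x ∈ compIn G S w) (hy : y ∈ S)
    (ha : G.Adj x y) : y ∈ compIn G S w :=
  hx.trans ⟨.cons ha .nil, by simp [hx.mem_right, hy]⟩

lemma walk_closed {S T : Set V} (hcl : ∀ x y, x ∈ T → y ∈ S → G.Adj x y → y ∈ T) :
    ∀ {w u : V} (p : G.Walk w u), (∀ x ∈ p.support, x ∈ S) → w ∈ T → u ∈ T := by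
  intro w u p
  induction p with
  | nil => exact fun _ h => h
  | cons ha q ih =>
    intro hs hw
    refine ih (fun x hx => hs x (by simp [hx])) ?_
    exact hcl _ _ hw (hs _ (by simp)) ha

lemma compIn_closed {S T : Set V} {w : V} (hw : w ∈ T)
    (hcl : ∀ x y, x ∈ T → y ∈ S → G.Adj x y → y ∈ T) : compIn G S w ⊆ T := by
  rintro u ⟨p, hp⟩
  exact walk_closed hcl p hp hw

lemma compIn_connected {S : Set V} {w : V} (hw : w ∈ S) :
    (G.induce (compIn G S w)).Connected := by
  refine G.induce_connected_of_patches w ⟨.nil, by simp [hw]⟩ ?_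
  rintro v ⟨p, hp⟩
  refine ⟨{x | x ∈ p.support}, ?_, p.start_mem_support, p.end_mem_support,
    (p.connected_induce_support).preconnected _ _⟩
  intro x hx
  exact ⟨p.takeUntil x hx, fun y hy => hp y (p.support_takeUntil_subset hx hy)⟩

lemma exists_walk_from {A : Set V} (hA : (G.induce A).Connected) {u v : V}
    (hu : u ∈ A) (hv : v ∈ A) : ∃ p : G.Walk u v, ∀ x ∈ p.support, x ∈ A := by
  obtain ⟨q⟩ := hA.preconnected ⟨u, hu⟩ ⟨v, hv⟩
  refine ⟨q.map (SimpleGraph.Embedding.induce A).toHom, fun x hx => ?_⟩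
  erw [SimpleGraph.Walk.support_map, List.mem_map] at hx
  obtain ⟨⟨y, hy⟩, -, rfl⟩ := hx
  exact hy

lemma exists_adj_walk {A : Set V} (hA : (G.induce A).Connected) {u v : V}
    (hu : u ∈ A) (hv : v ∈ A) (hne : u ≠ v) :
    ∃ (w : V) (_ : G.Adj v w) (q : G.Walk w u), v ∉ q.support ∧ ∀ x ∈ q.support, x ∈ A := by
  obtain ⟨p, hp⟩ := exists_walk_from hA hu hv
  have hvp : v ∈ p.support := p.end_mem_support
  have hcount : (p.takeUntil v hvp).support.count v = 1 :=
    p.count_support_takeUntil_eq_one hvp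
  have hsub : ∀ x ∈ (p.takeUntil v hvp).support.reverse, x ∈ A := fun x hx =>
    hp x (p.support_takeUntil_subset hvp (by simpa using hx))
  have hcount' : (p.takeUntil v hvp).support.reverse.count v = 1 := by
    rwa [List.count_reverse]
  have hrsupp : (p.takeUntil v hvp).reverse.support = (p.takeUntil v hvp).support.reverse :=
    SimpleGraph.Walk.support_reverse _
  rcases hrev : (p.takeUntil v hvp).reverse with _ | @⟨_, w, _, ha, q⟩
  · exact absurd rfl hne
  · rw [hrev, SimpleGraph.Walk.support_cons] at hrsupp
    refine ⟨w, ha, q, ?_, fun x hx => ?_⟩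
    · intro hvq
      rw [← hrsupp, List.count_cons_self] at hcount'
      have : 1 ≤ q.support.count v := List.one_le_count_iff.2 hvq
      omega
    · exact hsub x (by rw [← hrsupp]; simp [hx])
lemma compl_compIn_connected {A : Set V} (hA : (G.induce A).Connected) {v w0 : V}
    (hv : v ∈ A) : (G.induce (A \ compIn G (A \ {v}) w0)).Connected := by
  set B := compIn G (A \ {v}) w0 with hB
  have hvB : v ∈ A \ B := ⟨hv, fun h => (h.choose_spec v h.choose.end_mem_support).2 rfl⟩
  refine G.induce_connected_of_patches v hvB ?_
  intro u hu
  rcases eq_or_ne u v with rfl | hne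
  · exact ⟨{u}, by simpa using hvB, rfl, rfl, Reachable.refl _⟩
  obtain ⟨w, ha, q, hvq, hqA⟩ := exists_adj_walk hA hu.1 hv hne
  have hqB : ∀ x ∈ q.support, x ∈ A \ B := by
    intro x hx
    refine ⟨hqA x hx, fun hxB => hu.2 ?_⟩
    have h1 : ReachIn G (A \ {v}) x u :=
      ⟨q.dropUntil x hx, fun y hy =>
        ⟨hqA y (q.support_dropUntil_subset hx hy),
         fun h => hvq (by
           simp only [Set.mem_singleton_iff] at h
           exact h ▸ q.support_dropUntil_subset hx hy)⟩⟩
    obtain ⟨p1, hp1⟩ := hxB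
    obtain ⟨p2, hp2⟩ := h1
    exact ⟨p1.append p2, fun y hy => by
      rcases (SimpleGraph.Walk.mem_support_append_iff _ _).1 hy with h | h
      exacts [hp1 y h, hp2 y h]⟩
  set r : G.Walk v u := SimpleGraph.Walk.cons ha q with hr
  have hrB : ∀ x ∈ r.support, x ∈ A \ B := by
    intro x hx
    rw [hr, SimpleGraph.Walk.support_cons, List.mem_cons] at hx
    rcases hx with rfl | hx
    exacts [hvB, hqB x hx]
  exact ⟨{x | x ∈ r.support}, hrB, r.start_mem_support, r.end_mem_support,
    (r.connected_induce_support).preconnected _ _⟩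



lemma nbr_unique (hac : G.IsAcyclic) {S : Set V} {v c1 c2 : V} (hvS : v ∉ S)
    (h1 : G.Adj v c1) (h2 : G.Adj v c2) (hr : ReachIn G S c1 c2) : c1 = c2 := by
  by_contra hne
  obtain ⟨p, hp⟩ := hr
  have hvp : v ∉ p.bypass.support := fun h => hvS (hp v (p.support_bypass_subset h))
  have hpath2 : (SimpleGraph.Walk.cons h1 p.bypass).IsPath :=
    (SimpleGraph.Walk.cons_isPath_iff _ _).2 ⟨p.bypass_isPath, hvp⟩
  have hpath1 : (SimpleGraph.Walk.cons h2 SimpleGraph.Walk.nil).IsPath := by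
    simp [SimpleGraph.Walk.cons_isPath_iff, h2.ne]
  have := SimpleGraph.isAcyclic_iff_path_unique.1 hac ⟨_, hpath1⟩ ⟨_, hpath2⟩
  have hsup : (SimpleGraph.Walk.cons h2 (SimpleGraph.Walk.nil : G.Walk c2 c2)).support
      = (SimpleGraph.Walk.cons h1 p.bypass).support := by
    rw [Subtype.ext_iff] at this; exact congrArg SimpleGraph.Walk.support this
  have hc1 : c1 ∈ [v, c2] := by
    rw [show [v, c2] = (SimpleGraph.Walk.cons h2 (SimpleGraph.Walk.nil : G.Walk c2 c2)).support
      by simp, hsup]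
    simp
  simp only [List.mem_cons, List.not_mem_nil, or_false] at hc1
  rcases hc1 with rfl | rfl
  exacts [h1.ne rfl, hne rfl]

lemma ncard_biUnion_le' {ι : Type} [DecidableEq ι] (s : Finset ι) (f : ι → Set V) :
    (⋃ i ∈ s, f i).ncard ≤ ∑ i ∈ s, (f i).ncard := by
  classical
  induction s using Finset.induction_on with
  | empty => simp
  | insert a s ha ih =>
    rw [Finset.set_biUnion_insert, Finset.sum_insert ha]
    exact le_trans (Set.ncard_union_le _ _) (by omega)

lemma ncard_le_of_sub_biUnion {ι : Type} [Fintype V] [DecidableEq ι] {T : Set V} (s : Finset ι)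
    (f : ι → Set V) {L : ℕ} (hsub : T ⊆ ⋃ i ∈ s, f i) (hf : ∀ i ∈ s, (f i).ncard ≤ L) :
    T.ncard ≤ s.card * L := by
  calc T.ncard ≤ (⋃ i ∈ s, f i).ncard := Set.ncard_le_ncard hsub (Set.toFinite _)
    _ ≤ ∑ i ∈ s, (f i).ncard := ncard_biUnion_le' s f
    _ ≤ ∑ _i ∈ s, L := Finset.sum_le_sum hf
    _ = s.card * L := by simp [Finset.sum_const, mul_comm]

end Helpers

lemma main_partition {V : Type} [Fintype V] [DecidableEq V] {G : SimpleGraph V}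
    [DecidableRel G.Adj] (hac : G.IsAcyclic) {d L : ℕ} (hd : 2 ≤ d) (hL : 1 ≤ L)
    (hdeg : ∀ v : V, G.degree v ≤ d) :
    ∀ (n : ℕ) (A : Set V), A.ncard ≤ n → (G.induce A).Connected → L < A.ncard →
    ∃ P : Set (Set V), (⋃₀ P = A) ∧ (∀ S ∈ P, ∀ T ∈ P, S ≠ T → Disjoint S T) ∧
      ∀ S ∈ P, (G.induce S).Connected ∧ L < S.ncard ∧ S.ncard ≤ d * L + 1 := by
  intro n
  induction n with
  | zero => intro A h0 _ hL'; omega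
  | succ n ih =>
    intro A hAn hAconn hAL
    set 𝒮 : Set (Set V) :=
      {C | C = A ∨ ∃ v ∈ A, ∃ w ∈ A, w ≠ v ∧ C = compIn G (A \ {v}) w ∧ L < C.ncard} with h𝒮
    have hA𝒮 : A ∈ 𝒮 := Or.inl rfl
    -- choose a minimal element of 𝒮
    have hne : {k | ∃ C ∈ 𝒮, C.ncard = k}.Nonempty := ⟨A.ncard, A, hA𝒮, rfl⟩
    obtain ⟨B, hB𝒮, hBcard⟩ := Nat.sInf_mem hne
    have hmin : ∀ C ∈ 𝒮, B.ncard ≤ C.ncard := fun C hC => by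
      rw [hBcard]; exact Nat.sInf_le ⟨C, hC, rfl⟩
    clear hBcard
    have hBL : L < B.ncard := by
      rcases hB𝒮 with rfl | ⟨v, hv, w, hw, hwv, rfl, h⟩
      exacts [hAL, h]
    have hBsub : B ⊆ A := by
      rcases hB𝒮 with rfl | ⟨v, hv, w, hw, hwv, rfl, h⟩
      exacts [subset_rfl, (compIn_subset _ _).trans Set.diff_subset]
    -- the key size bound, subcase B = A
    by_cases hBA : B = A
    · -- every component of A minus a vertex has size ≤ L, hence A is small
      subst hBA
      have hBne : B.Nonempty := Set.nonempty_of_ncard_ne_zero (by omega)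
      obtain ⟨v, hv⟩ := hBne
      have hsmall : ∀ w, G.Adj v w → (compIn G (B \ {v}) w).ncard ≤ L := by
        intro w ha
        by_contra h
        push_neg at h
        have hwB : w ∈ B \ {v} := by
          obtain ⟨u, hu⟩ := Set.nonempty_of_ncard_ne_zero (show (compIn G (B\{v}) w).ncard ≠ 0 by omega)
          exact hu.mem_left
        have hC𝒮 : compIn G (B \ {v}) w ∈ 𝒮 :=
          Or.inr ⟨v, hv, w, hwB.1, hwB.2, rfl, h⟩
        have hlt : (compIn G (B \ {v}) w).ncard < B.ncard :=
          Set.ncard_lt_ncard (Set.ssubset_of_subset_of_ssubset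
            (compIn_subset _ _) (Set.sdiff_singleton_ssubset.2 hv)) (Set.toFinite _)
        exact absurd (hmin _ hC𝒮) (by omega)
      have hcover : B \ {v} ⊆ ⋃ w ∈ G.neighborFinset v, compIn G (B \ {v}) w := by
        intro u hu
        obtain ⟨w, ha, q, hvq, hqA⟩ := exists_adj_walk hAconn hu.1 hv hu.2
        have : u ∈ compIn G (B \ {v}) w :=
          ⟨q, fun x hx => ⟨hqA x hx, fun hxv => hvq (by rwa [hxv] at hx)⟩⟩
        simp only [Set.mem_iUnion]
        exact ⟨w, by simp [ha], this⟩
      have h1 : (B \ {v}).ncard ≤ (G.neighborFinset v).card * L :=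
        ncard_le_of_sub_biUnion _ _ hcover (fun w hw => hsmall w (by simpa using hw))
      have h2 : (B \ {v}).ncard + 1 = B.ncard := by
        have := Set.ncard_diff_add_ncard_of_subset (show {v} ⊆ B by simpa using hv)
          (Set.toFinite _)
        simpa using this
      have h3 : (G.neighborFinset v).card ≤ d := by
        rw [G.card_neighborFinset_eq_degree]; exact hdeg v
      refine ⟨{B}, by simp, by simp, ?_⟩
      rintro S hS
      simp only [Set.mem_singleton_iff] at hS
      subst hS
      refine ⟨hAconn, hBL, ?_⟩
      have : (G.neighborFinset v).card * L ≤ d * L := Nat.mul_le_mul_right L h3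
      omega
    · -- B is a component of A \ {v}
      have hB' : ∃ v ∈ A, ∃ w ∈ A, w ≠ v ∧ B = compIn G (A \ {v}) w ∧ L < B.ncard := by
        rcases hB𝒮 with h | h
        exacts [absurd h hBA, h]
      obtain ⟨v, hv, w0, hw0, hw0v, hBdef, -⟩ := hB'
      have hvB : v ∉ B := by
        rw [hBdef]; exact fun h => ((compIn_subset _ _) h).2 rfl
      -- find the unique neighbor c0 of v inside B
      have hBne : B.Nonempty := Set.nonempty_of_ncard_ne_zero (by omega)
      obtain ⟨u0, hu0⟩ := hBne
      have hu0A : u0 ∈ A := hBsub hu0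
      obtain ⟨c0, hadj, q0, hvq0, hq0A⟩ := exists_adj_walk hAconn hu0A hv (fun h => hvB (h ▸ hu0))
      have hc0B : c0 ∈ B := by
        have hr : ReachIn G (A \ {v}) c0 u0 :=
          ⟨q0, fun x hx => ⟨hq0A x hx, fun h => hvq0 (by rwa [h] at hx)⟩⟩
        have : compIn G (A \ {v}) u0 = compIn G (A \ {v}) c0 := compIn_eq hr
        have hu0B : u0 ∈ compIn G (A \ {v}) w0 := hBdef ▸ hu0
        rw [hBdef, compIn_eq hu0B.symm, this]
        exact mem_compIn_self hr.mem_left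
      have hBcomp : B = compIn G (A \ {v}) u0 := by
        have hu0B : u0 ∈ compIn G (A \ {v}) w0 := hBdef ▸ hu0
        rw [hBdef, compIn_eq hu0B.symm]
      have hunique : ∀ x ∈ B, G.Adj v x → x = c0 := by
        intro x hx hax
        refine nbr_unique hac (fun h : v ∈ A \ {v} => h.2 rfl) hax hadj ?_
        have h1 : ReachIn G (A \ {v}) u0 x := by rw [hBcomp] at hx; exact hx
        have h2 : ReachIn G (A \ {v}) u0 c0 := by
          have := hc0B; rw [hBcomp] at this; exact this
        exact h1.symm.trans h2
      -- components of A \ {c0} rooted inside B stay inside B \ {c0}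
      have hc0A : c0 ∈ A := hBsub hc0B
      have hclosed : ∀ u ∈ B \ {c0}, compIn G (A \ {c0}) u ⊆ B \ {c0} := by
        intro u hu
        refine compIn_closed hu ?_
        rintro x y hx ⟨hyA, hyc0⟩ haxy
        refine ⟨?_, hyc0⟩
        rcases eq_or_ne y v with rfl | hyv
        · exact absurd (hunique x hx.1 haxy.symm) hx.2
        · have hxB : x ∈ compIn G (A \ {v}) u0 := by
            have := hx.1; rwa [hBcomp] at this
          have : y ∈ compIn G (A \ {v}) u0 := adj_mem_compIn hxB ⟨hyA, hyv⟩ haxy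
          rw [hBcomp]; exact this
      -- every component of A \ {c0} rooted at a neighbor ≠ v of c0 is small
      have hsmall : ∀ w, G.Adj c0 w → w ≠ v → (compIn G (A \ {c0}) w).ncard ≤ L := by
        intro w haw hwv
        by_contra h
        push_neg at h
        have hwA : w ∈ A \ {c0} := by
          obtain ⟨u, hu⟩ := Set.nonempty_of_ncard_ne_zero
            (show (compIn G (A \ {c0}) w).ncard ≠ 0 by omega)
          exact hu.mem_left
        have hC𝒮 : compIn G (A \ {c0}) w ∈ 𝒮 := Or.inr ⟨c0, hc0A, w, hwA.1, hwA.2, rfl, h⟩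
        have hwB : w ∈ B \ {c0} := by
          have hcB : c0 ∈ compIn G (A \ {v}) u0 := by
            have := hc0B; rwa [hBcomp] at this
          have : w ∈ compIn G (A \ {v}) u0 := adj_mem_compIn hcB ⟨hwA.1, hwv⟩ haw
          exact ⟨by rw [hBcomp]; exact this, hwA.2⟩
        have hsub : compIn G (A \ {c0}) w ⊆ B \ {c0} := hclosed w hwB
        have hlt : (compIn G (A \ {c0}) w).ncard < B.ncard :=
          lt_of_le_of_lt (Set.ncard_le_ncard hsub (Set.toFinite _))
            (Set.ncard_lt_ncard (Set.sdiff_singleton_ssubset.2 hc0B) (Set.toFinite _))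
        exact absurd (hmin _ hC𝒮) (by omega)
      -- covering B \ {c0} by components rooted at neighbors of c0 other than v
      have hcover : B \ {c0} ⊆
          ⋃ w ∈ (G.neighborFinset c0).erase v, compIn G (A \ {c0}) w := by
        intro u hu
        have huA : u ∈ A := hBsub hu.1
        obtain ⟨w, haw, q, hcq, hqA⟩ := exists_adj_walk hAconn huA hc0A hu.2
        have humem : u ∈ compIn G (A \ {c0}) w :=
          ⟨q, fun x hx => ⟨hqA x hx, fun h => hcq (by rwa [h] at hx)⟩⟩
        have hwv : w ≠ v := by
          intro hwv
          have hvcomp : w ∈ compIn G (A \ {c0}) u := ReachIn.symm humem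
          exact hvB (hwv ▸ (hclosed u hu hvcomp).1)
        simp only [Set.mem_iUnion]
        exact ⟨w, by simp [haw, hwv], humem⟩
      have h1 : (B \ {c0}).ncard ≤ ((G.neighborFinset c0).erase v).card * L :=
        ncard_le_of_sub_biUnion _ _ hcover (fun w hw => by
          simp only [Finset.mem_erase, SimpleGraph.mem_neighborFinset] at hw
          exact hsmall w hw.2 hw.1)
      have h2 : (B \ {c0}).ncard + 1 = B.ncard := by
        have := Set.ncard_diff_add_ncard_of_subset (show {c0} ⊆ B by simpa using hc0B)
          (Set.toFinite _)
        simpa using this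
      have h3 : ((G.neighborFinset c0).erase v).card ≤ d - 1 := by
        have hvmem : v ∈ G.neighborFinset c0 := by simpa using hadj.symm
        have := Finset.card_erase_of_mem hvmem
        have := hdeg c0
        rw [← G.card_neighborFinset_eq_degree] at this
        omega
      have hBbound : B.ncard ≤ (d - 1) * L + 1 := by
        have : ((G.neighborFinset c0).erase v).card * L ≤ (d - 1) * L :=
          Nat.mul_le_mul_right L h3
        omega
      have hBdL : B.ncard ≤ d * L + 1 := by
        have : (d - 1) * L ≤ d * L := Nat.mul_le_mul_right L (by omega)
        omega
      -- connectivity facts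
      have hBconn : (G.induce B).Connected := by
        rw [hBcomp]; exact compIn_connected (⟨hu0A, fun h => hvB (h ▸ hu0)⟩ : u0 ∈ A \ {v})
      have hABconn : (G.induce (A \ B)).Connected := by
        rw [hBdef]; exact compl_compIn_connected hAconn (w0 := w0) hv
      have hcardsplit : (A \ B).ncard + B.ncard = A.ncard :=
        Set.ncard_diff_add_ncard_of_subset hBsub (Set.toFinite _)
      by_cases hrest : L < (A \ B).ncard
      · -- recurse on A \ B
        obtain ⟨P', hP'union, hP'disj, hP'props⟩ := ih (A \ B) (by omega) hABconn hrest
        refine ⟨insert B P', ?_, ?_, ?_⟩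
        · rw [Set.sUnion_insert, hP'union]
          exact Set.union_diff_cancel hBsub
        · intro S hS T hT hST
          have key : ∀ T' ∈ P', Disjoint B T' := fun T' hT' =>
            Set.disjoint_of_subset_right
              (by rw [← hP'union]; exact Set.subset_sUnion_of_mem hT')
              Set.disjoint_sdiff_right
          rcases hS with rfl | hS <;> rcases hT with rfl | hT
          · exact absurd rfl hST
          · exact key T hT
          · exact (key S hS).symm
          · exact hP'disj S hS T hT hST
        · rintro S (rfl | hS)
          · exact ⟨hBconn, hBL, hBdL⟩
          · exact hP'props S hS
      · -- A itself is small
        push_neg at hrest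
        refine ⟨{A}, by simp, by simp, ?_⟩
        rintro S hS
        simp only [Set.mem_singleton_iff] at hS
        subst hS
        refine ⟨hAconn, hAL, ?_⟩
        have hmul : (d - 1) * L + 1 * L = ((d - 1) + 1) * L := (Nat.add_mul _ _ _).symm
        have hdd : (d - 1) + 1 = d := by omega
        rw [hdd] at hmul
        omega

/-- Let `d ≥ 2` and `L ≥ 1` be integers and `T` a finite tree on `n` vertices with every
vertex of degree at most `d` and `n > L`.  Then the vertex set of `T` can be partitioned
into nonempty parts, each inducing a connected subgraph of `T`, with each part containing
more than `L` and at most `d * L + 1` vertices. -/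
theorem tree_cluster_partition {V : Type} [Fintype V] (G : SimpleGraph V)
    [DecidableRel G.Adj] (hT : G.IsTree) (d L : ℕ) (hd : 2 ≤ d) (hL : 1 ≤ L)
    (hdeg : ∀ v : V, G.degree v ≤ d) (hn : L < Fintype.card V) :
    ∃ P : Set (Set V), Setoid.IsPartition P ∧
      ∀ S ∈ P, (G.induce S).Connected ∧ L < Nat.card S ∧ Nat.card S ≤ d * L + 1 := by
  classical
  have huniv_conn : (G.induce (Set.univ : Set V)).Connected :=
    (G.induceUnivIso).connected_iff.2 hT.isConnected
  have huniv_card : L < (Set.univ : Set V).ncard := by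
    rwa [Set.ncard_univ, Nat.card_eq_fintype_card]
  obtain ⟨P, hPunion, hPdisj, hPprops⟩ :=
    main_partition hT.IsAcyclic hd hL hdeg (Set.univ : Set V).ncard
      Set.univ le_rfl huniv_conn huniv_card
  refine ⟨P, ⟨?_, ?_⟩, ?_⟩
  · intro hemp
    have := (hPprops ∅ hemp).2.1
    simp [Set.ncard_empty] at this
  · intro a
    have ha : a ∈ ⋃₀ P := by rw [hPunion]; trivial
    obtain ⟨b, hbP, hab⟩ := ha
    refine ⟨b, ⟨hbP, hab⟩, ?_⟩
    rintro c ⟨hcP, hac⟩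
    by_contra hne
    exact (hPdisj c hcP b hbP hne).ne_of_mem hac hab rfl
  · intro S hS
    obtain ⟨h1, h2, h3⟩ := hPprops S hS
    rw [Nat.card_coe_set_eq]
    exact ⟨h1, h2, h3⟩
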